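/- Suppose (B_m)_{m≥0} are events with P(A | Z = m+L) ≤ P(B | Z = m) for all m, P(B | Z = m) = 0 whenever m < (1+η/2)λ, and Z ~ Poisson(λ). Then P(A) ≤ (1+η/2)^{-L} P(B). -/

import Mathlib

open MeasureTheory ProbabilityTheory

lemma poisson_fact_bound (c lam : ℝ) (hc : 0 ≤ c) (hlam : 0 ≤ lam) (m : ℕ)
    (hm : c * lam ≤ m) (L : ℕ) :
    c ^ L * (lam ^ L * (m.factorial : ℝ)) ≤ ((m+L).factorial : ℝ) := by
  induction L with
  | zero => simp
  | succ L ih =>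
    have h1 : c^(L+1) * (lam^(L+1) * (m.factorial:ℝ))
        = (c*lam) * (c^L * (lam^L * m.factorial)) := by ring
    have h2 : (m + (L+1)).factorial = (m+L+1) * (m+L).factorial := by
      rw [← Nat.add_assoc]; exact Nat.factorial_succ _
    rw [h1, h2]
    push_cast
    apply mul_le_mul _ ih (by positivity) (by positivity)
    have : (0:ℝ) ≤ (L:ℝ) := Nat.cast_nonneg L
    linarith


/-- If `Z ~ Poisson(λ)`, `P(A | Z = m+L) ≤ P(B | Z = m)` for all `m`,
`P(A | Z = m) = 0` for `m < L`, and `P(B | Z = m) = 0` whenever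
`m < (1 + η/2)·λ`, then `P(A) ≤ (1 + η/2)^{-L}·P(B)`. -/
theorem poisson_conditional_contraction {Ω : Type*} [MeasurableSpace Ω]
    (μ : Measure Ω) [IsProbabilityMeasure μ]
    (Z : Ω → ℕ) (hZmeas : Measurable Z)
    (lam η : ℝ) (hlam : 0 < lam) (hη : 0 < η) (L : ℕ) (hL : 1 ≤ L)
    (A B : Set Ω) (hA : MeasurableSet A)
    (hZ : ∀ m : ℕ, μ {ω | Z ω = m}
        = ENNReal.ofReal (lam ^ m * Real.exp (-lam) / (Nat.factorial m : ℝ)))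
    (hAB : ∀ m : ℕ, μ[|{ω | Z ω = m + L}] A ≤ μ[|{ω | Z ω = m}] B)
    (hA0 : ∀ m : ℕ, m < L → μ[|{ω | Z ω = m}] A = 0)
    (hB0 : ∀ m : ℕ, (m : ℝ) < (1 + η / 2) * lam → μ[|{ω | Z ω = m}] B = 0) :
    μ A ≤ ENNReal.ofReal (((1 + η / 2)⁻¹) ^ L) * μ B := by
  set c : ℝ := 1 + η / 2 with hc_def
  have hc1 : (1:ℝ) < c := by rw [hc_def]; linarith
  have hc0 : (0:ℝ) < c := by linarith
  set s : ℕ → Set Ω := fun n => {ω | Z ω = n} with hs_def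
  have hZ' : ∀ n, μ (s n) = ENNReal.ofReal (lam ^ n * Real.exp (-lam) / (n.factorial : ℝ)) :=
    fun n => hZ n
  have hsm : ∀ n, MeasurableSet (s n) := fun n => hZmeas (measurableSet_singleton n)
  have hspos : ∀ n, μ (s n) ≠ 0 := by
    intro n
    rw [hZ' n, Ne, ENNReal.ofReal_eq_zero, not_le]
    positivity
  have hsfin : ∀ n, μ (s n) ≠ ⊤ := fun n => measure_ne_top μ _
  have hcond : ∀ (n : ℕ) (T : Set Ω), μ (s n ∩ T) = μ[|s n] T * μ (s n) := by
    intro n T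
    rw [cond_apply (hsm n), mul_right_comm, ENNReal.inv_mul_cancel (hspos n) (hsfin n), one_mul]
  have hdecomp : ∀ T : Set Ω, μ T = ∑' n, μ (s n ∩ T) := by
    intro T
    have h2 : (Set.univ : Set Ω) = ⋃ n, s n := by ext ω; simp [hs_def]
    have h3 : Pairwise (Function.onFun Disjoint s) := by
      intro i j hij
      simp only [Function.onFun, Set.disjoint_left, hs_def]
      intro ω ha hb
      exact hij (ha ▸ hb ▸ rfl)
    have h4 : μ.restrict T Set.univ = ∑' n, μ.restrict T (s n) := by
      rw [h2, measure_iUnion h3 hsm]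
    rw [← Measure.restrict_apply_univ (μ := μ) T, h4]
    congr 1; ext n
    exact Measure.restrict_apply (hsm n)
  have hAzero : ∀ n, n < L → μ (s n ∩ A) = 0 := by
    intro n hn
    rw [hcond, hA0 n hn, zero_mul]
  have hshift : μ A = ∑' m, μ (s (m + L) ∩ A) := by
    rw [hdecomp A]
    refine (Function.Injective.tsum_eq (g := fun m : ℕ => m + L)
      (add_left_injective L) ?_).symm
    intro n hn
    simp only [Function.mem_support] at hn
    have hnL : ¬ n < L := fun h => hn (hAzero n h)
    exact ⟨n - L, by show n - L + L = n; omega⟩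
  have hratio : ∀ m : ℕ, c * lam ≤ (m:ℝ) →
      μ (s (m + L)) ≤ ENNReal.ofReal (c⁻¹ ^ L) * μ (s m) := by
    intro m hm
    rw [hZ', hZ', ← ENNReal.ofReal_mul (by positivity)]
    apply ENNReal.ofReal_le_ofReal
    have hfpos : (0:ℝ) < ((m+L).factorial : ℝ) := by positivity
    have hfpos' : (0:ℝ) < (m.factorial : ℝ) := by positivity
    have key := poisson_fact_bound c lam hc0.le hlam.le m hm L
    have key2 : lam ^ L * (m.factorial : ℝ) ≤ c⁻¹ ^ L * ((m+L).factorial : ℝ) := by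
      have hcc : c⁻¹ ^ L * c ^ L = 1 := by
        rw [← mul_pow, inv_mul_cancel₀ hc0.ne', one_pow]
      calc lam ^ L * (m.factorial : ℝ) = (c⁻¹^L * c^L) * (lam^L * m.factorial) := by
            rw [hcc, one_mul]
        _ = c⁻¹^L * (c^L * (lam^L * m.factorial)) := by ring
        _ ≤ c⁻¹^L * ((m+L).factorial : ℝ) :=
            mul_le_mul_of_nonneg_left key (by positivity)
    rw [← mul_div_assoc, div_le_div_iff₀ hfpos hfpos']
    calc lam ^ (m + L) * Real.exp (-lam) * (m.factorial : ℝ)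
        = (lam ^ m * Real.exp (-lam)) * (lam ^ L * m.factorial) := by rw [pow_add]; ring
      _ ≤ (lam ^ m * Real.exp (-lam)) * (c⁻¹ ^ L * ((m+L).factorial : ℝ)) :=
          mul_le_mul_of_nonneg_left key2 (by positivity)
      _ = c⁻¹ ^ L * (lam ^ m * Real.exp (-lam)) * ((m+L).factorial : ℝ) := by ring
  have hterm : ∀ m : ℕ, μ (s (m + L) ∩ A)
      ≤ ENNReal.ofReal (c⁻¹ ^ L) * μ (s m ∩ B) := by
    intro m
    rw [hcond, hcond]
    by_cases hm : (m:ℝ) < c * lam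
    · have hB := hB0 m hm
      have hA' : μ[|s (m+L)] A = 0 := le_antisymm (by rw [← hB]; exact hAB m) zero_le
      rw [hA', zero_mul]
      exact zero_le
    · push_neg at hm
      calc μ[|s (m+L)] A * μ (s (m+L))
          ≤ μ[|s m] B * (ENNReal.ofReal (c⁻¹^L) * μ (s m)) :=
            mul_le_mul' (hAB m) (hratio m hm)
        _ = ENNReal.ofReal (c⁻¹^L) * (μ[|s m] B * μ (s m)) := by ring
  calc μ A = ∑' m, μ (s (m + L) ∩ A) := hshift
    _ ≤ ∑' m, ENNReal.ofReal (c⁻¹^L) * μ (s m ∩ B) := ENNReal.tsum_le_tsum hterm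
    _ = ENNReal.ofReal (c⁻¹^L) * ∑' m, μ (s m ∩ B) := ENNReal.tsum_mul_left
    _ = ENNReal.ofReal (c⁻¹^L) * μ B := by rw [← hdecomp B]
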